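/- Let L > 0 be real, N ≥ 2 an integer, m ≥ 1 an integer, and λ = m²·π²/L². Then the real vector space V(λ) of λ-eigenfunction systems (with the differential equation imposed on all of ℝ) on the equilateral N-star of edge length L has dimension 1. -/

import Mathlib

open Real Finset

/-- Membership in the space `V(λ)` of `λ`-eigenfunction systems on the equilateral
`N`-star of edge length `L`, with the differential equation `f'' = -λ f` imposed
on all of `ℝ`: `C²` functions, continuity at the central vertex, Kirchhoff condition
at the central vertex, Neumann (standard) conditions at the boundary vertices. -/
def MemStarEigenspace (N : ℕ) (L lam : ℝ) (f : Fin N → ℝ → ℝ) : Prop :=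
  (∀ i, ContDiff ℝ 2 (f i)) ∧
  (∀ i, ∀ x : ℝ, deriv (deriv (f i)) x = -lam * f i x) ∧
  (∀ i j, f i 0 = f j 0) ∧
  (∑ i, deriv (f i) 0 = 0) ∧
  (∀ i, deriv (f i) L = 0)


lemma hasDerivAt_cos_mul' (k x : ℝ) :
    HasDerivAt (fun x : ℝ => Real.cos (k * x)) (-(k * Real.sin (k * x))) x := by
  have h := (Real.hasDerivAt_cos (k * x)).comp x ((hasDerivAt_id x).const_mul k)
  exact h.congr_deriv (by ring)

lemma hasDerivAt_sin_mul' (k x : ℝ) :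
    HasDerivAt (fun x : ℝ => Real.sin (k * x)) (k * Real.cos (k * x)) x := by
  have h := (Real.hasDerivAt_sin (k * x)).comp x ((hasDerivAt_id x).const_mul k)
  exact h.congr_deriv (by ring)

lemma deriv2_of_contdiff (f : ℝ → ℝ) (hf : ContDiff ℝ 2 f) :
    Differentiable ℝ f ∧ Differentiable ℝ (deriv f) := by
  have h2 : ContDiff ℝ ((1 : ℕ) + 1) f := by norm_num at hf ⊢; exact hf
  have := (contDiff_succ_iff_deriv.mp h2).2.2
  exact ⟨hf.differentiable (by norm_num), this.differentiable (by norm_num)⟩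

lemma ode_cos_sin (k : ℝ) (hk : 0 < k) (f : ℝ → ℝ) (hf : ContDiff ℝ 2 f)
    (hode : ∀ x, deriv (deriv f) x = -(k ^ 2) * f x) (x : ℝ) :
    f x = f 0 * Real.cos (k * x) + (deriv f 0 / k) * Real.sin (k * x) := by
  obtain ⟨hdf, hdf'⟩ := deriv2_of_contdiff f hf
  set A := f 0 with hA
  set B := deriv f 0 / k with hB
  set g : ℝ → ℝ := fun x => f x - A * Real.cos (k * x) - B * Real.sin (k * x) with hg
  -- derivative of g
  have hg' : ∀ x, HasDerivAt g (deriv f x + A * (k * Real.sin (k * x))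
      - B * (k * Real.cos (k * x))) x := by
    intro x
    have h1 := (hdf x).hasDerivAt
    have h2 := (hasDerivAt_cos_mul' k x).const_mul A
    have h3 := (hasDerivAt_sin_mul' k x).const_mul B
    have := (h1.sub h2).sub h3
    exact this.congr_deriv (by ring)
  set G : ℝ → ℝ := fun x => deriv f x + A * (k * Real.sin (k * x))
      - B * (k * Real.cos (k * x)) with hG
  have hderivg : deriv g = G := funext fun x => (hg' x).deriv
  -- derivative of G
  have hG' : ∀ x, HasDerivAt G (-(k ^ 2) * g x) x := by
    intro x
    have h1 := (hdf' x).hasDerivAt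
    have h2 := ((hasDerivAt_sin_mul' k x).const_mul k).const_mul A
    have h3 := ((hasDerivAt_cos_mul' k x).const_mul k).const_mul B
    have h := (h1.add h2).sub h3
    have : HasDerivAt G (deriv (deriv f) x + A * (k * (k * Real.cos (k * x)))
        - B * (k * -(k * Real.sin (k * x)))) x := by
      exact h
    rw [hode x] at this
    convert this using 1
    simp only [hg]; ring
  -- energy function
  set E : ℝ → ℝ := fun x => (G x) ^ 2 + k ^ 2 * (g x) ^ 2 with hE
  have hE' : ∀ x, HasDerivAt E 0 x := by
    intro x
    have h1 := ((hG' x).pow 2)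
    have h2 := ((hg' x).pow 2).const_mul (k ^ 2)
    have h := h1.add h2
    have hgx : deriv f x + A * (k * Real.sin (k * x)) - B * (k * Real.cos (k * x)) = G x := rfl
    rw [hgx] at h
    exact h.congr_deriv (by ring)
  have hEconst : ∀ x, E x = E 0 :=
    fun x => is_const_of_deriv_eq_zero (fun y => (hE' y).differentiableAt)
      (fun y => (hE' y).deriv) x 0
  have hg0 : g 0 = 0 := by simp [hg, hA]
  have hG0 : G 0 = 0 := by
    simp only [hG, mul_zero, Real.sin_zero, Real.cos_zero, hB]
    field_simp; ring
  have hE0 : E 0 = 0 := by simp [hE, hg0, hG0]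
  have hEx : E x = 0 := (hEconst x).trans hE0
  have hgzero : g x = 0 := by
    have h1 : (G x) ^ 2 + k ^ 2 * (g x) ^ 2 = 0 := hEx
    have h2 : k ^ 2 * (g x) ^ 2 = 0 := by nlinarith [sq_nonneg (G x), sq_nonneg (g x)]
    have := mul_eq_zero.mp h2
    rcases this with h | h
    · exact absurd h (by positivity)
    · exact pow_eq_zero_iff (by norm_num) |>.mp h
  have : f x - A * Real.cos (k * x) - B * Real.sin (k * x) = 0 := hgzero
  linarith

/-- For `L > 0`, `N ≥ 2`, an integer `m ≥ 1` and `λ = m² π² / L²`, the space `V(λ)` of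
`λ`-eigenfunction systems on the equilateral `N`-star of edge length `L` has
dimension `1`: there is a linearly independent one-element family in `V(λ)`
spanning all of `V(λ)`. -/
theorem star_eigenspace_dim_integer (N : ℕ) (hN : 2 ≤ N) (L : ℝ) (hL : 0 < L)
    (m : ℕ) (hm : 1 ≤ m) (lam : ℝ) (hlam : lam = (m : ℝ) ^ 2 * Real.pi ^ 2 / L ^ 2) :
    ∃ b : Fin 1 → (Fin N → ℝ → ℝ),
      (∀ k, MemStarEigenspace N L lam (b k)) ∧
      LinearIndependent ℝ b ∧
      ∀ f : Fin N → ℝ → ℝ, MemStarEigenspace N L lam f →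
        f ∈ Submodule.span ℝ (Set.range b) := by
  have hπ := Real.pi_pos
  set k : ℝ := m * Real.pi / L with hkdef
  have hm0 : (0 : ℝ) < m := by exact_mod_cast hm
  have hk : 0 < k := by positivity
  have hklam : lam = k ^ 2 := by
    rw [hlam, hkdef]; field_simp
  have hkL : k * L = m * Real.pi := by
    rw [hkdef]; field_simp
  have hsinL : Real.sin (k * L) = 0 := by rw [hkL]; exact Real.sin_nat_mul_pi m
  have hcosL : Real.cos (k * L) = (-1 : ℝ) ^ m := by
    rw [hkL]
    have := Real.cos_nat_mul_pi_sub 0 m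
    simpa using this
  refine ⟨fun _ => fun _ => fun x => Real.cos (k * x), ?_, ?_, ?_⟩
  · intro j
    refine ⟨?_, ?_, ?_, ?_, ?_⟩
    · intro i
      exact Real.contDiff_cos.comp (contDiff_const.mul contDiff_id)
    · intro i x
      have h1 : deriv (fun x : ℝ => Real.cos (k * x)) = fun x => -(k * Real.sin (k * x)) :=
        funext fun x => (hasDerivAt_cos_mul' k x).deriv
      rw [h1]
      have h2 : HasDerivAt (fun x : ℝ => -(k * Real.sin (k * x)))
          (-(k * (k * Real.cos (k * x)))) x := by
        have := ((hasDerivAt_sin_mul' k x).const_mul k).neg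
        exact this
      rw [h2.deriv, hklam]
      ring
    · intro i j; rfl
    · have h1 : deriv (fun x : ℝ => Real.cos (k * x)) 0 = 0 := by
        rw [(hasDerivAt_cos_mul' k 0).deriv]; simp
      simp [h1]
    · intro i
      rw [(hasDerivAt_cos_mul' k L).deriv, hsinL]; ring
  · apply linearIndependent_unique_iff.mpr
    intro h
    have := congrFun (congrFun h ⟨0, by omega⟩) 0
    simp at this
  · rintro f ⟨hC2, hode, hcont, hkir, hneu⟩
    have hrep : ∀ i, f i = fun x => f i 0 * Real.cos (k * x)
        + (deriv (f i) 0 / k) * Real.sin (k * x) := by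
      intro i
      exact funext (ode_cos_sin k hk (f i) (hC2 i)
        (fun x => by rw [hode i x, hklam]))
    have hB : ∀ i, deriv (f i) 0 / k = 0 := by
      intro i
      set Ai := f i 0
      set Bi := deriv (f i) 0 / k
      have hd : HasDerivAt (fun x => Ai * Real.cos (k * x) + Bi * Real.sin (k * x))
          (Ai * -(k * Real.sin (k * L)) + Bi * (k * Real.cos (k * L))) L :=
        ((hasDerivAt_cos_mul' k L).const_mul Ai).add ((hasDerivAt_sin_mul' k L).const_mul Bi)
      have hzero := hneu i
      rw [hrep i, hd.deriv, hsinL, hcosL] at hzero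
      have h2 : Bi * (k * (-1 : ℝ) ^ m) = 0 := by linarith [hzero]
      have hne : k * (-1 : ℝ) ^ m ≠ 0 :=
        mul_ne_zero hk.ne' (pow_ne_zero m (by norm_num))
      exact (mul_eq_zero.mp h2).resolve_right hne
    have hrange : Set.range (fun _ : Fin 1 => fun _ : Fin N => fun x => Real.cos (k * x))
        = {fun _ : Fin N => fun x : ℝ => Real.cos (k * x)} := Set.range_unique
    rw [hrange, Submodule.mem_span_singleton]
    refine ⟨f ⟨0, by omega⟩ 0, ?_⟩
    funext i x
    have := hrep i
    rw [hB i] at this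
    have hval : f i x = f i 0 * Real.cos (k * x) := by
      rw [this]; simp
    rw [Pi.smul_apply, Pi.smul_apply, smul_eq_mul, hval, hcont i ⟨0, by omega⟩]
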